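/- If f is the CDF of N(0, σ²), then for all real a and b, log(f(b)) - log(f(a)) ≥ (f'(a)/f(a))·(b - a) - (1/(2σ²))·(b - a)². -/

import Mathlib

open Real Set MeasureTheory Filter Topology

noncomputable def stdNormalPDF (t : ℝ) : ℝ := (Real.sqrt (2 * Real.pi))⁻¹ * Real.exp (-t ^ 2 / 2)

noncomputable def stdNormalCDF (x : ℝ) : ℝ := ∫ t in Set.Iic x, stdNormalPDF t

lemma pdf_pos (t : ℝ) : 0 < stdNormalPDF t := by
  unfold stdNormalPDF
  positivity

lemma pdf_cont : Continuous stdNormalPDF := by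
  unfold stdNormalPDF
  fun_prop

lemma pdf_eq (t : ℝ) : stdNormalPDF t = (Real.sqrt (2 * Real.pi))⁻¹ * Real.exp (-(1/2) * t ^ 2) := by
  unfold stdNormalPDF; ring_nf

lemma pdf_integrable : Integrable stdNormalPDF := by
  have h := (integrable_exp_neg_mul_sq (by norm_num : (0:ℝ) < 1/2)).const_mul
    (Real.sqrt (2 * Real.pi))⁻¹
  refine h.congr (Filter.Eventually.of_forall fun t => ?_)
  rw [pdf_eq]

lemma pdf_hasDeriv (t : ℝ) : HasDerivAt stdNormalPDF (-t * stdNormalPDF t) t := by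
  have h1 : HasDerivAt (fun t : ℝ => -t ^ 2 / 2) (-t) t := by
    have := ((hasDerivAt_pow 2 t).neg).div_const 2
    simpa using this.congr_deriv (by ring)
  have h2 := (h1.exp).const_mul (Real.sqrt (2 * Real.pi))⁻¹
  refine h2.congr_deriv ?_
  unfold stdNormalPDF; ring

lemma cdf_pos (x : ℝ) : 0 < stdNormalCDF x := by
  unfold stdNormalCDF
  rw [setIntegral_pos_iff_support_of_nonneg_ae]
  · have : Function.support stdNormalPDF = univ := by
      ext t; simp [Function.mem_support, (pdf_pos t).ne']
    rw [this, univ_inter]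
    simp [Real.volume_Iic]
  · exact Filter.Eventually.of_forall fun t => (pdf_pos t).le
  · exact pdf_integrable.integrableOn

lemma cdf_hasDeriv (x : ℝ) : HasDerivAt stdNormalCDF (stdNormalPDF x) x := by
  have key : ∀ y : ℝ, stdNormalCDF y = stdNormalCDF 0 + ∫ t in (0:ℝ)..y, stdNormalPDF t := by
    intro y
    unfold stdNormalCDF
    rw [← intervalIntegral.integral_Iic_sub_Iic pdf_integrable.integrableOn
      pdf_integrable.integrableOn]
    ring
  have h : HasDerivAt (fun y => stdNormalCDF 0 + ∫ t in (0:ℝ)..y, stdNormalPDF t)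
      (stdNormalPDF x) x := by
    have h0 : HasDerivAt (fun y => ∫ t in (0:ℝ)..y, stdNormalPDF t) (stdNormalPDF x) x :=
      intervalIntegral.integral_hasDerivAt_right
        (pdf_integrable.intervalIntegrable)
        (pdf_cont.stronglyMeasurableAtFilter _ _)
        pdf_cont.continuousAt
    exact h0.const_add _
  exact h.congr_of_eventuallyEq (Filter.Eventually.of_forall key)

lemma pdf_tendsto_atBot : Tendsto stdNormalPDF atBot (𝓝 0) := by
  have hsq : Tendsto (fun t : ℝ => t ^ 2) atBot atTop := by
    have h : Tendsto (fun t : ℝ => t * t) atBot atTop :=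
      Filter.Tendsto.atBot_mul_atBot₀ tendsto_id tendsto_id
    exact h.congr fun t => (sq t).symm
  have h2 : Tendsto (fun t : ℝ => -t ^ 2 / 2) atBot atBot := by
    have := tendsto_neg_atTop_atBot.comp hsq
    exact (this.atBot_div_const (by norm_num))
  have h3 : Tendsto (fun t : ℝ => Real.exp (-t ^ 2 / 2)) atBot (𝓝 0) :=
    Real.tendsto_exp_atBot.comp h2
  have h4 := h3.const_mul (Real.sqrt (2 * Real.pi))⁻¹
  rw [mul_zero] at h4
  exact h4.congr fun t => by rw [stdNormalPDF]

lemma mul_pdf_tendsto_atBot : Tendsto (fun u : ℝ => u * stdNormalPDF u) atBot (𝓝 0) := by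
  have h1 : Tendsto (fun x : ℝ => x * Real.exp (-x)) atTop (𝓝 0) := by
    simpa using Real.tendsto_pow_mul_exp_neg_atTop_nhds_zero 1
  have hsq : Tendsto (fun u : ℝ => u ^ 2 / 2) atBot atTop := by
    have h : Tendsto (fun t : ℝ => t * t) atBot atTop :=
      Filter.Tendsto.atBot_mul_atBot₀ tendsto_id tendsto_id
    have h' : Tendsto (fun t : ℝ => t ^ 2) atBot atTop := h.congr fun t => (sq t).symm
    exact h'.atTop_div_const (by norm_num)
  have h2 : Tendsto (fun u : ℝ => (u ^ 2 / 2) * Real.exp (-(u ^ 2 / 2))) atBot (𝓝 0) :=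
    h1.comp hsq
  have h3 := (h2.const_mul (2 * (Real.sqrt (2 * Real.pi))⁻¹))
  rw [mul_zero] at h3
  refine squeeze_zero_norm' ?_ h3
  filter_upwards [eventually_le_atBot (-2 : ℝ)] with u hu
  have hu2 : |u| ≤ u ^ 2 := by nlinarith [abs_nonneg u, sq_abs u, neg_abs_le u]
  have hpos : (0:ℝ) < (Real.sqrt (2 * Real.pi))⁻¹ := by positivity
  have hexp : Real.exp (-u ^ 2 / 2) = Real.exp (-(u ^ 2 / 2)) := by ring_nf
  rw [Real.norm_eq_abs, abs_mul, stdNormalPDF, abs_mul, abs_of_pos hpos,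
    abs_of_pos (Real.exp_pos _), hexp]
  have hee : (0:ℝ) ≤ Real.exp (-(u ^ 2 / 2)) := (Real.exp_pos _).le
  nlinarith [hu2, hpos.le, mul_le_mul_of_nonneg_right hu2 hee]

lemma cdf_tendsto_atBot : Tendsto stdNormalCDF atBot (𝓝 0) := by
  have h : Tendsto (fun n : ℝ => ∫ t in Iic (-n), stdNormalPDF t) atTop
      (𝓝 (∫ t in ⋂ n : ℝ, Iic (-n), stdNormalPDF t)) :=
    tendsto_setIntegral_of_antitone (fun _ => measurableSet_Iic)
      (fun i j hij => Iic_subset_Iic.2 (by linarith))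
      ⟨0, pdf_integrable.integrableOn⟩
  have hempty : (⋂ n : ℝ, Iic (-n)) = ∅ := by
    ext x
    simp only [mem_iInter, mem_Iic, mem_empty_iff_false, iff_false]
    push_neg
    exact ⟨-(x - 1), by linarith⟩
  rw [hempty] at h
  simp only [MeasureTheory.setIntegral_empty] at h
  have h2 := h.comp tendsto_neg_atBot_atTop
  refine h2.congr fun x => ?_
  simp [stdNormalCDF, Function.comp]

noncomputable def millsD (u : ℝ) : ℝ := stdNormalCDF u + u / (1 + u ^ 2) * stdNormalPDF u

lemma millsD_hasDeriv (u : ℝ) :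
    HasDerivAt millsD (2 / (1 + u ^ 2) ^ 2 * stdNormalPDF u) u := by
  have hne : (1 + u ^ 2) ≠ 0 := by positivity
  have h1 : HasDerivAt (fun u : ℝ => u / (1 + u ^ 2))
      ((1 * (1 + u ^ 2) - u * (0 + (2:ℕ) * u ^ 1)) / (1 + u ^ 2) ^ 2) u :=
    (hasDerivAt_id u).div ((hasDerivAt_const u 1).add (hasDerivAt_pow 2 u)) hne
  have h2 := (cdf_hasDeriv u).add (h1.mul (pdf_hasDeriv u))
  refine h2.congr_deriv ?_
  field_simp
  ring

lemma millsD_tendsto : Tendsto millsD atBot (𝓝 0) := by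
  have h1 : Tendsto (fun u : ℝ => u / (1 + u ^ 2) * stdNormalPDF u) atBot (𝓝 0) := by
    refine squeeze_zero_norm (fun u => ?_) pdf_tendsto_atBot
    rw [Real.norm_eq_abs, abs_mul, abs_div, abs_of_pos (by positivity : (0:ℝ) < 1 + u ^ 2),
      abs_of_pos (pdf_pos u)]
    have hb : |u| / (1 + u ^ 2) ≤ 1 := by
      rw [div_le_one (by positivity)]
      nlinarith [sq_abs u, abs_nonneg u, sq_nonneg (|u| - 1)]
    nlinarith [pdf_pos u, abs_nonneg u, div_nonneg (abs_nonneg u) (by positivity : (0:ℝ) ≤ 1 + u ^ 2)]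
  have := cdf_tendsto_atBot.add h1
  rw [add_zero] at this
  exact this.congr fun u => by rw [millsD]

lemma millsD_nonneg (u : ℝ) : 0 ≤ millsD u := by
  have hmono : Monotone millsD :=
    monotone_of_deriv_nonneg (fun x => (millsD_hasDeriv x).differentiableAt)
      (fun x => by
        rw [(millsD_hasDeriv x).deriv]
        exact mul_nonneg (by positivity) (pdf_pos x).le)
  refine le_of_tendsto millsD_tendsto ?_
  filter_upwards [eventually_le_atBot u] with t ht
  exact hmono ht

noncomputable def keyG (u : ℝ) : ℝ :=
  stdNormalCDF u * stdNormalCDF u - stdNormalPDF u * stdNormalPDF u -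
    u * stdNormalPDF u * stdNormalCDF u

lemma keyG_hasDeriv (u : ℝ) :
    HasDerivAt keyG (stdNormalPDF u * ((1 + u ^ 2) * millsD u)) u := by
  have hΦ := cdf_hasDeriv u
  have hφ := pdf_hasDeriv u
  have h := ((hΦ.mul hΦ).sub (hφ.mul hφ)).sub (((hasDerivAt_id u).mul hφ).mul hΦ)
  refine h.congr_deriv ?_
  have hne : (1 + u ^ 2) ≠ 0 := by positivity
  rw [millsD]
  field_simp
  simp only [Pi.mul_apply, id_eq]
  ring

lemma keyG_tendsto : Tendsto keyG atBot (𝓝 0) := by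
  have h := ((cdf_tendsto_atBot.mul cdf_tendsto_atBot).sub
      (pdf_tendsto_atBot.mul pdf_tendsto_atBot)).sub
    (mul_pdf_tendsto_atBot.mul cdf_tendsto_atBot)
  norm_num at h
  exact h.congr fun u => by rw [keyG]

lemma keyG_nonneg (u : ℝ) : 0 ≤ keyG u := by
  have hmono : Monotone keyG :=
    monotone_of_deriv_nonneg (fun x => (keyG_hasDeriv x).differentiableAt)
      (fun x => by
        rw [(keyG_hasDeriv x).deriv]
        exact mul_nonneg (pdf_pos x).le (mul_nonneg (by positivity) (millsD_nonneg x)))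
  refine le_of_tendsto keyG_tendsto ?_
  filter_upwards [eventually_le_atBot u] with t ht
  exact hmono ht

noncomputable def logCDF (u : ℝ) : ℝ := Real.log (stdNormalCDF u) + u ^ 2 / 2

noncomputable def kfun (u : ℝ) : ℝ := stdNormalPDF u / stdNormalCDF u + u

lemma logCDF_hasDeriv (u : ℝ) : HasDerivAt logCDF (kfun u) u := by
  have h1 := (cdf_hasDeriv u).log (cdf_pos u).ne'
  have h2 := (hasDerivAt_pow 2 u).div_const 2
  refine (h1.add h2).congr_deriv ?_
  rw [kfun]
  push_cast
  ring

lemma kfun_hasDeriv (u : ℝ) :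
    HasDerivAt kfun (keyG u / stdNormalCDF u ^ 2) u := by
  have h := ((pdf_hasDeriv u).div (cdf_hasDeriv u) (cdf_pos u).ne').add (hasDerivAt_id u)
  refine h.congr_deriv ?_
  rw [keyG]
  have hΦ := (cdf_pos u).ne'
  field_simp
  ring

lemma kfun_mono : Monotone kfun :=
  monotone_of_deriv_nonneg (fun x => (kfun_hasDeriv x).differentiableAt)
    (fun x => by
      rw [(kfun_hasDeriv x).deriv]
      exact div_nonneg (keyG_nonneg x) (sq_nonneg _))

lemma tangent (u v : ℝ) : kfun u * (v - u) ≤ logCDF v - logCDF u := by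
  rcases lt_trichotomy u v with h | h | h
  · obtain ⟨c, hc, hceq⟩ := exists_hasDerivAt_eq_slope logCDF kfun h
      (fun x _ => (logCDF_hasDeriv x).continuousAt.continuousWithinAt)
      (fun x _ => logCDF_hasDeriv x)
    have h1 : kfun u ≤ kfun c := kfun_mono hc.1.le
    have hvu : (0:ℝ) < v - u := sub_pos.2 h
    have h2 : kfun c * (v - u) = logCDF v - logCDF u := by
      rw [hceq]; field_simp
    nlinarith
  · subst h; simp
  · obtain ⟨c, hc, hceq⟩ := exists_hasDerivAt_eq_slope logCDF kfun h
      (fun x _ => (logCDF_hasDeriv x).continuousAt.continuousWithinAt)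
      (fun x _ => logCDF_hasDeriv x)
    have h1 : kfun c ≤ kfun u := kfun_mono hc.2.le
    have hvu : (0:ℝ) < u - v := sub_pos.2 h
    have h2 : kfun c * (u - v) = logCDF u - logCDF v := by
      rw [hceq]; field_simp
    nlinarith

lemma key_ineq (u v : ℝ) :
    Real.log (stdNormalCDF v) - Real.log (stdNormalCDF u) ≥
      stdNormalPDF u / stdNormalCDF u * (v - u) - (v - u) ^ 2 / 2 := by
  have h := tangent u v
  rw [kfun, logCDF, logCDF] at h
  nlinarith [h]

/-- If `f` is the CDF of `N(0, σ²)`, then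
`log f(b) - log f(a) ≥ (f'(a)/f(a)) (b - a) - (1/(2σ²)) (b - a)²`. -/
theorem stmt4 (σ : ℝ) (hσ : 0 < σ) (f : ℝ → ℝ) (hf : ∀ x, f x = stdNormalCDF (x / σ))
    (a b : ℝ) :
    Real.log (f b) - Real.log (f a) ≥
      (deriv f a / f a) * (b - a) - (1 / (2 * σ ^ 2)) * (b - a) ^ 2 := by
  have hfe : f = fun x => stdNormalCDF (x / σ) := funext hf
  subst hfe
  have hσ' : σ ≠ 0 := hσ.ne'
  have hd : HasDerivAt (fun x => stdNormalCDF (x / σ)) (stdNormalPDF (a / σ) * (1 / σ)) a := by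
    have h1 : HasDerivAt (fun x : ℝ => x / σ) (1 / σ) a := (hasDerivAt_id a).div_const σ
    exact (cdf_hasDeriv (a / σ)).comp a h1
  rw [hd.deriv]
  have hkey := key_ineq (a / σ) (b / σ)
  have hvu : b / σ - a / σ = (b - a) / σ := by ring
  rw [hvu] at hkey
  have hΦ := (cdf_pos (a / σ)).ne'
  have e1 : stdNormalPDF (a / σ) * (1 / σ) / stdNormalCDF (a / σ) * (b - a)
      = stdNormalPDF (a / σ) / stdNormalCDF (a / σ) * ((b - a) / σ) := by
    ring
  have e2 : 1 / (2 * σ ^ 2) * (b - a) ^ 2 = ((b - a) / σ) ^ 2 / 2 := by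
    rw [div_pow, div_div, one_div, mul_inv, div_eq_mul_inv, mul_inv]
    ring
  rw [e1, e2]
  exact hkey
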